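/- Let U(t,τ) be a dissipative process (i.e., admitting a pullback absorbing family 𝔅 = {B_t}). Then A*_t equals the time-dependent ω-limit of 𝔅 at time t, namely A*_t = ⋂_{y ≤ t} closure( ⋃_{τ ≤ y} U(t,τ)B_τ ) in X_t. In particular A*_t is closed, contained in the closure of B_t, and the family {A*_t} is uniformly bounded. -/

import Mathlib

open Filter Metric Set Topology

/-- A family of sets is uniformly bounded. -/
def UnifBdd {X : ℝ → Type*} [∀ t, NormedAddCommGroup (X t)] (C : ∀ t, Set (X t)) : Prop :=
  ∃ R > 0, ∀ t, C t ⊆ closedBall (0 : X t) R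

/-- Pullback absorbing family for a process `U`. -/
def PullbackAbsorbing {X : ℝ → Type*} [∀ t, NormedAddCommGroup (X t)]
    (U : ∀ t τ : ℝ, X τ → X t) (B : ∀ t, Set (X t)) : Prop :=
  UnifBdd B ∧ ∀ t : ℝ, ∀ R > 0, ∃ t0 ≤ t, ∀ τ ≤ t0, U t τ '' closedBall 0 R ⊆ B t

/-- Pullback attracting family: every ε-neighborhood family is pullback absorbing. -/
def PullbackAttracting {X : ℝ → Type*} [∀ t, NormedAddCommGroup (X t)]
    (U : ∀ t τ : ℝ, X τ → X t) (K : ∀ t, Set (X t)) : Prop :=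
  UnifBdd K ∧ ∀ ε > 0, PullbackAbsorbing U (fun t => thickening ε (K t))

/-- Set of subsequential limits of a sequence. -/
def LimSet {Y : Type*} [NormedAddCommGroup Y] (y : ℕ → Y) : Set Y :=
  {x | ∃ φ : ℕ → ℕ, StrictMono φ ∧ Tendsto (y ∘ φ) atTop (𝓝 x)}

/-- `A*_t`: union of subsequential limit sets of sequences `U t τₙ xₙ` with
`τₙ → -∞` and `xₙ` uniformly bounded. -/
def AStar {X : ℝ → Type*} [∀ t, NormedAddCommGroup (X t)]
    (U : ∀ t τ : ℝ, X τ → X t) (t : ℝ) : Set (X t) :=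
  {x | ∃ (τ : ℕ → ℝ) (xs : ∀ n, X (τ n)),
      Tendsto τ atTop atBot ∧ (∃ R, ∀ n, ‖xs n‖ ≤ R) ∧
      x ∈ LimSet (fun n => U t (τ n) (xs n))}

theorem stmt1 {X : ℝ → Type*} [∀ t, NormedAddCommGroup (X t)]
    (U : ∀ t τ : ℝ, X τ → X t)
    (hU1 : ∀ (t : ℝ) (x : X t), U t t x = x)
    (hU2 : ∀ {t τ σ : ℝ}, σ ≤ τ → τ ≤ t → ∀ x : X σ, U t τ (U τ σ x) = U t σ x)
    (B : ∀ t, Set (X t)) (hB : PullbackAbsorbing U B) :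
    (∀ t : ℝ, AStar U t = ⋂ y ∈ Iic t, closure (⋃ τ ∈ Iic y, U t τ '' B τ)) ∧
    (∀ t : ℝ, IsClosed (AStar U t)) ∧
    (∀ t : ℝ, AStar U t ⊆ closure (B t)) ∧
    UnifBdd (AStar U) := by

  obtain ⟨⟨R₀, hR₀, hBR⟩, habs⟩ := hB
  have hmain : ∀ t : ℝ, AStar U t = ⋂ y ∈ Iic t, closure (⋃ τ ∈ Iic y, U t τ '' B τ) := by
    intro t
    apply Subset.antisymm
    · rintro x ⟨τ, xs, hτ, ⟨R, hR⟩, φ, hφ, hlim⟩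
      simp only [mem_iInter, mem_Iic]
      intro y hy
      have hRpos : (0 : ℝ) < R + 1 := by
        have := norm_nonneg (xs 0); have := hR 0; linarith
      obtain ⟨t0, ht0, habs'⟩ := habs y (R + 1) hRpos
      have htend : Tendsto (fun n => τ (φ n)) atTop atBot := hτ.comp hφ.tendsto_atTop
      have hev : ∀ᶠ n in atTop, τ (φ n) ≤ t0 := htend.eventually_le_atBot t0
      refine mem_closure_of_tendsto hlim ?_
      filter_upwards [hev] with n hn
      have hτy : τ (φ n) ≤ y := hn.trans ht0
      have heq : U t (τ (φ n)) (xs (φ n)) = U t y (U y (τ (φ n)) (xs (φ n))) :=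
        (hU2 hτy hy (xs (φ n))).symm
      have hmem : U y (τ (φ n)) (xs (φ n)) ∈ B y := by
        apply habs' (τ (φ n)) hn
        exact ⟨xs (φ n), by simp [mem_closedBall_zero_iff]; linarith [hR (φ n)], rfl⟩
      simp only [Function.comp]
      rw [heq]
      exact mem_iUnion₂.2 ⟨y, le_refl y, ⟨U y (τ (φ n)) (xs (φ n)), hmem, rfl⟩⟩
    · intro x hx
      simp only [mem_iInter, mem_Iic] at hx
      have key : ∀ n : ℕ, ∃ τ' : ℝ, τ' ≤ t - n ∧ ∃ z : X τ',
          z ∈ B τ' ∧ dist x (U t τ' z) < 1 / (n + 1) := by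
        intro n
        have hclo := hx (t - n) (sub_le_self t (Nat.cast_nonneg n))
        obtain ⟨b, hb, hdb⟩ := Metric.mem_closure_iff.1 hclo (1 / (n + 1)) (by positivity)
        obtain ⟨τ', hτ', z, hz, rfl⟩ := by simpa only [mem_iUnion₂, mem_Iic] using hb
        exact ⟨τ', hτ', z, hz, hdb⟩
      choose τ hτle z hzB hdist using key
      refine ⟨τ, z, ?_, ⟨R₀, fun n => mem_closedBall_zero_iff.1 (hBR (τ n) (hzB n))⟩,
        id, strictMono_id, ?_⟩
      · rw [tendsto_atBot]
        intro b
        obtain ⟨N, hN⟩ := exists_nat_ge (t - b)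
        filter_upwards [eventually_ge_atTop N] with n hn
        have : (N : ℝ) ≤ n := Nat.cast_le.2 hn
        have := hτle n
        linarith
      · rw [Metric.tendsto_atTop]
        intro ε hε
        obtain ⟨N, hN⟩ := exists_nat_one_div_lt hε
        refine ⟨N, fun n hn => ?_⟩
        have h1 : dist (U t (τ n) (z n)) x < 1 / (n + 1) := by
          rw [dist_comm]; exact hdist n
        have h2 : (1 : ℝ) / (n + 1) ≤ 1 / (N + 1) := by
          apply one_div_le_one_div_of_le (by positivity)
          have : (N : ℝ) ≤ n := Nat.cast_le.2 hn
          linarith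
        calc dist (((fun n => U t (τ n) (z n)) ∘ id) n) x
            = dist (U t (τ n) (z n)) x := rfl
          _ < ε := lt_of_lt_of_le h1 (h2.trans hN.le)
  have hsub : ∀ t : ℝ, AStar U t ⊆ closure (B t) := by
    intro t
    obtain ⟨t0, ht0, hab⟩ := habs t R₀ hR₀
    intro x hx
    rw [hmain t] at hx
    have hx0 : x ∈ closure (⋃ τ ∈ Iic t0, U t τ '' B τ) := by
      simp only [mem_iInter, mem_Iic] at hx
      exact hx t0 ht0
    refine closure_mono ?_ hx0
    intro p hp
    obtain ⟨τ', hτ', z, hz, rfl⟩ := by simpa only [mem_iUnion₂, mem_Iic] using hp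
    exact hab τ' hτ' ⟨z, mem_closedBall_zero_iff.2
      (mem_closedBall_zero_iff.1 (hBR τ' hz)), rfl⟩
  refine ⟨hmain, fun t => ?_, hsub, ⟨R₀, hR₀, fun t => (hsub t).trans
    (closure_minimal (hBR t) isClosed_closedBall)⟩⟩
  rw [hmain t]
  exact isClosed_biInter fun y _ => isClosed_closure
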